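/- arXiv:1703.00569 — 7 statements merged into one kernel-verified Lean document; each statement's English description precedes it below -/
import Mathlib

section
/- Let X be a weakly Hausdorff topological space. Then for every compact Hausdorff space K and every continuous map u : K → X, the image u(K), equipped with the subspace topology from X, is a compact Hausdorff space. -/
/-- If `X` is a weakly Hausdorff topological space (i.e. the image of every
continuous map from a compact Hausdorff space is closed), then for every compact Hausdorff
space `K` and every continuous map `u : K → X`, the image `u(K)`, with the subspace topology,
is a compact Hausdorff space. -/
theorem image_compact_and_t2_of_weaklyHausdorff {X : Type*} [TopologicalSpace X]
    (hWH : ∀ (K : Type) [TopologicalSpace K] [CompactSpace K] [T2Space K] (u : C(K, X)),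
      IsClosed (Set.range u))
    (K : Type) [TopologicalSpace K] [CompactSpace K] [T2Space K] (u : C(K, X)) :
    IsCompact (Set.range u) ∧ T2Space (Set.range u) := by
  constructor
  · exact isCompact_range u.continuous
  · -- `v : K → range u` is the corestriction of `u`.
    set Y := Set.range u
    set v : K → Y := fun k => ⟨u k, Set.mem_range_self k⟩ with hv
    have hvc : Continuous v := u.continuous.subtype_mk _
    have hvs : Function.Surjective v := by
      rintro ⟨x, k, rfl⟩; exact ⟨k, rfl⟩
    -- `v` is a closed map, since images of closed sets are closed in `X` by `hWH`.
    have hclosed : IsClosedMap v := by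
      intro C hC
      have hCcl : IsClosed (u '' C) := by
        have : CompactSpace C := isCompact_iff_compactSpace.mp (hC.isCompact)
        have := hWH C (u.comp ⟨Subtype.val, continuous_subtype_val⟩)
        simpa [Set.range_comp] using this
      have : v '' C = Subtype.val ⁻¹' (u '' C) := by
        ext ⟨y, hy⟩
        simp only [Set.mem_image, Set.mem_preimage]
        constructor
        · rintro ⟨k, hk, hk'⟩; exact ⟨k, hk, congrArg Subtype.val hk'⟩
        · rintro ⟨k, hk, hku⟩; exact ⟨k, hk, Subtype.ext hku⟩
      rw [this]
      exact hCcl.preimage continuous_subtype_val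
    constructor
    intro a b hab
    -- separate fibers in the compact Hausdorff (hence normal) space K
    have hsing : ∀ c : Y, IsClosed (v ⁻¹' {c}) := by
      intro c
      obtain ⟨x, k0, rfl⟩ := c
      have hx : IsClosed ({u k0} : Set X) := by
        have := hWH PUnit ⟨fun _ => u k0, continuous_const⟩
        simpa [Set.range_const] using this
      have : v ⁻¹' {⟨u k0, Set.mem_range_self k0⟩} = u ⁻¹' {u k0} := by
        ext k; simp [hv, Subtype.ext_iff]
      rw [this]
      exact hx.preimage u.continuous
    have hA : IsClosed (v ⁻¹' {a}) := hsing a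
    have hB : IsClosed (v ⁻¹' {b}) := hsing b
    have hd : Disjoint (v ⁻¹' {a}) (v ⁻¹' {b}) := by
      rw [Set.disjoint_left]
      rintro k (rfl : v k = a) (hk : v k = b)
      exact hab hk
    obtain ⟨U, V, hU, hV, hAU, hBV, hUV⟩ := normal_separation hA hB hd
    refine ⟨(v '' Uᶜ)ᶜ, (v '' Vᶜ)ᶜ, (hclosed _ hU.isClosed_compl).isOpen_compl,
      (hclosed _ hV.isClosed_compl).isOpen_compl, ?_, ?_, ?_⟩
    · intro h
      obtain ⟨k, hk, hk'⟩ := h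
      exact hk (hAU hk')
    · intro h
      obtain ⟨k, hk, hk'⟩ := h
      exact hk (hBV hk')
    · rw [Set.disjoint_left]
      rintro y hyU hyV
      obtain ⟨k, rfl⟩ := hvs y
      by_cases hkU : k ∈ U
      · exact hyV ⟨k, fun hkV => hUV.le_bot ⟨hkU, hkV⟩, rfl⟩
      · exact hyU ⟨k, hkU, rfl⟩
end

section
/- Let X = (([0,1] ∩ ℚ) ∪ [1,2] ∪ ([2,3] ∩ ℚ)) ⊆ ℝ and Y = [0,2] ∩ ℚ with the subspace topologies, and let f : X → Y be the continuous map with f(x) = x for x ≤ 1, f(x) = 1 for 1 ≤ x ≤ 2, and f(x) = x − 1 for x ≥ 2. Let ℕ∞ denote the one-point compactification of the discrete space ℕ, and let h : ℕ∞ → Y be the continuous map with h(n) = 1 + (−1)ⁿ/(n+2) for n ∈ ℕ and h(∞) = 1. Then there is no continuous map g : ℕ∞ → X with f ∘ g = h; in particular, the induced map f_* : C(ℕ∞, X) → C(ℕ∞, Y) is not surjective. -/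
open Set OnePoint Filter Topology

/-- `X = ([0,1] ∩ ℚ) ∪ [1,2] ∪ ([2,3] ∩ ℚ) ⊆ ℝ`. -/
def Xcounter : Set ℝ :=
  (Icc (0 : ℝ) 1 ∩ range ((↑) : ℚ → ℝ)) ∪ Icc (1 : ℝ) 2 ∪ (Icc (2 : ℝ) 3 ∩ range ((↑) : ℚ → ℝ))

/-- `Y = [0,2] ∩ ℚ ⊆ ℝ`. -/
def Ycounter : Set ℝ :=
  Icc (0 : ℝ) 2 ∩ range ((↑) : ℚ → ℝ)

/-- Auxiliary limit: `1 / (u k + 2) → 0` whenever `u → ∞`. -/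
lemma aux_one_div_tendsto (u : ℕ → ℕ) (hu : Tendsto u atTop atTop) :
    Tendsto (fun k : ℕ => (1 : ℝ) / ((u k : ℝ) + 2)) atTop (𝓝 0) := by
  have h1 : Tendsto (fun n : ℕ => (n : ℝ) + 2) atTop atTop :=
    tendsto_atTop_add_const_right _ _ tendsto_natCast_atTop_atTop
  have h2 : Tendsto (fun n : ℕ => ((n : ℝ) + 2)⁻¹) atTop (𝓝 0) :=
    tendsto_inv_atTop_zero.comp h1
  simpa [one_div, Function.comp_def] using h2.comp hu

/-- Let `f : X → Y` be the continuous map collapsing the middle interval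
(`f(x) = x` for `x ≤ 1`, `f(x) = 1` for `1 ≤ x ≤ 2`, `f(x) = x − 1` for `x ≥ 2`), and let
`h : ℕ∞ → Y` be the continuous map with `h(n) = 1 + (−1)ⁿ/(n+2)` and `h(∞) = 1`, where
`ℕ∞` is the one-point compactification of the discrete space `ℕ`. Then there is no continuous
`g : ℕ∞ → X` with `f ∘ g = h`; in particular the induced map
`f_* : C(ℕ∞, X) → C(ℕ∞, Y)` is not surjective. -/
theorem no_lift_through_collapse
    (f : C(Xcounter, Ycounter))
    (hf₁ : ∀ x : Xcounter, (x : ℝ) ≤ 1 → (f x : ℝ) = (x : ℝ))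
    (hf₂ : ∀ x : Xcounter, 1 ≤ (x : ℝ) → (x : ℝ) ≤ 2 → (f x : ℝ) = 1)
    (hf₃ : ∀ x : Xcounter, 2 ≤ (x : ℝ) → (f x : ℝ) = (x : ℝ) - 1)
    (h : C(OnePoint ℕ, Ycounter))
    (hh₁ : ∀ n : ℕ, (h (n : OnePoint ℕ) : ℝ) = 1 + (-1) ^ n / (n + 2))
    (hh₂ : (h ∞ : ℝ) = 1) :
    (¬ ∃ g : C(OnePoint ℕ, Xcounter), f.comp g = h) ∧
      ¬ Function.Surjective (fun g : C(OnePoint ℕ, Xcounter) => f.comp g) := by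
  have main : ¬ ∃ g : C(OnePoint ℕ, Xcounter), f.comp g = h := by
    rintro ⟨g, hg⟩
    have hfg : ∀ n : ℕ, (f (g (n : OnePoint ℕ)) : ℝ) = 1 + (-1) ^ n / (n + 2) := by
      intro n
      rw [← hh₁ n, ← hg]; rfl
    have heven : ∀ n : ℕ, Even n → (g (n : OnePoint ℕ) : ℝ) = 2 + 1 / (n + 2) := by
      intro n hn
      have hv : (f (g (n : OnePoint ℕ)) : ℝ) = 1 + 1 / (n + 2) := by
        rw [hfg n, hn.neg_one_pow]
      have hpos : (0:ℝ) < 1 / (n + 2) := by positivity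
      have hlt : (1:ℝ) / (n + 2) ≤ 1 := by
        rw [div_le_one (by positivity)]; linarith [Nat.cast_nonneg (α := ℝ) n]
      rcases le_or_gt ((g (n : OnePoint ℕ) : ℝ)) 1 with h1 | h1
      · have := hf₁ _ h1; rw [hv] at this; linarith
      · rcases le_or_gt ((g (n : OnePoint ℕ) : ℝ)) 2 with h2 | h2
        · have := hf₂ _ h1.le h2; rw [hv] at this; linarith
        · have := hf₃ _ h2.le; rw [hv] at this; linarith
    have hodd : ∀ n : ℕ, Odd n → (g (n : OnePoint ℕ) : ℝ) = 1 - 1 / (n + 2) := by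
      intro n hn
      have hv : (f (g (n : OnePoint ℕ)) : ℝ) = 1 - 1 / (n + 2) := by
        rw [hfg n, hn.neg_one_pow]; ring
      have hpos : (0:ℝ) < 1 / (n + 2) := by positivity
      rcases le_or_gt ((g (n : OnePoint ℕ) : ℝ)) 1 with h1 | h1
      · have := hf₁ _ h1; rw [hv] at this; linarith
      · rcases le_or_gt ((g (n : OnePoint ℕ) : ℝ)) 2 with h2 | h2
        · have := hf₂ _ h1.le h2; rw [hv] at this; linarith
        · have := hf₃ _ h2.le; rw [hv] at this; linarith
    have hcont : Tendsto (fun n : ℕ => ((g (n : OnePoint ℕ)) : ℝ))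
        atTop (𝓝 ((g ∞ : ℝ))) :=
      (continuous_subtype_val.tendsto _).comp
        ((OnePoint.continuous_iff_from_nat _).1 g.continuous)
    have h2k : Tendsto (fun k : ℕ => (2 * k : ℕ)) atTop atTop :=
      tendsto_atTop_mono (fun k => Nat.le_mul_of_pos_left k two_pos) tendsto_id
    have h2k1 : Tendsto (fun k : ℕ => (2 * k + 1 : ℕ)) atTop atTop :=
      tendsto_atTop_mono (fun k => Nat.le_succ_of_le
        (Nat.le_mul_of_pos_left k two_pos)) tendsto_id
    -- limit along even indices
    have he : Tendsto (fun k : ℕ => ((g ((2 * k : ℕ) : OnePoint ℕ)) : ℝ)) atTop (𝓝 2) := by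
      have := (tendsto_const_nhds (x := (2:ℝ)) (f := atTop)).add
        (aux_one_div_tendsto _ h2k)
      simp only [add_zero] at this
      exact this.congr (fun k => (heven (2 * k) (even_two_mul k)).symm)
    have ho : Tendsto (fun k : ℕ => ((g ((2 * k + 1 : ℕ) : OnePoint ℕ)) : ℝ)) atTop (𝓝 1) := by
      have := (tendsto_const_nhds (x := (1:ℝ)) (f := atTop)).sub
        (aux_one_div_tendsto _ h2k1)
      simp only [sub_zero] at this
      exact this.congr (fun k => (hodd (2 * k + 1) (odd_two_mul_add_one k)).symm)
    have e2 : (g ∞ : ℝ) = 2 := tendsto_nhds_unique (hcont.comp h2k) he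
    have e1 : (g ∞ : ℝ) = 1 := tendsto_nhds_unique (hcont.comp h2k1) ho
    linarith [e1 ▸ e2]
  exact ⟨main, fun hs => main (hs h)⟩
end

section
/- Let X be a locally path-connected topological space. Then the endpoint map C([0,1], X) → X × X, sending a path γ to (γ(0), γ(1)), is an open map, where C([0,1], X) carries the compact-open topology. -/
open Set Filter Topology TopologicalSpace unitInterval

/-- If `X` is locally path-connected, then the endpoint map
`C([0,1], X) → X × X`, `γ ↦ (γ(0), γ(1))`, is an open map (where the mapping space carries
the compact-open topology). -/
theorem isOpenMap_endpoints_of_locPathConnected {X : Type*} [TopologicalSpace X]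
    [LocallyPathConnectedSpace X] :
    IsOpenMap fun γ : C(unitInterval, X) => (γ 0, γ 1) := by
  intro U hU
  rw [isOpen_iff_mem_nhds]
  rintro ⟨a, b⟩ ⟨γ, hγU, hab⟩
  simp only [Prod.mk.injEq] at hab
  obtain ⟨rfl, rfl⟩ := hab
  -- get a basic compact-open set around γ inside U
  have basis := TopologicalSpace.isTopologicalBasis_of_subbasis
    (ContinuousMap.compactOpen_eq (X := unitInterval) (Y := X))
  obtain ⟨v, ⟨T, ⟨hTfin, hTsub⟩, rfl⟩, hγv, hvU⟩ := basis.exists_subset_of_mem_open hγU hU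
  have hex : ∀ s ∈ T, ∃ K V, IsCompact K ∧ IsOpen V ∧
      {f : C(unitInterval, X) | Set.MapsTo f K V} = s := by
    intro s hs
    rcases hTsub hs with ⟨K, hK, V, hV, rfl⟩
    exact ⟨K, V, hK, hV, rfl⟩
  choose! K V hKc hVo hKV using hex
  have hmem : ∀ s ∈ T, Set.MapsTo γ (K s) (V s) := by
    intro s hs
    have : γ ∈ s := hγv s hs
    rw [← hKV s hs] at this
    exact this
  -- path connected neighborhoods of the endpoints
  set V₀ : Set X := ⋂ s ∈ {s ∈ T | (0 : unitInterval) ∈ K s}, V s with hV₀def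
  set V₁ : Set X := ⋂ s ∈ {s ∈ T | (1 : unitInterval) ∈ K s}, V s with hV₁def
  have hV₀o : IsOpen V₀ :=
    (hTfin.subset (sep_subset _ _)).isOpen_biInter fun s hs => hVo s hs.1
  have hV₁o : IsOpen V₁ :=
    (hTfin.subset (sep_subset _ _)).isOpen_biInter fun s hs => hVo s hs.1
  have hγ0V₀ : γ 0 ∈ V₀ := mem_iInter₂.2 fun s hs => hmem s hs.1 hs.2
  have hγ1V₁ : γ 1 ∈ V₁ := mem_iInter₂.2 fun s hs => hmem s hs.1 hs.2
  obtain ⟨W₀, ⟨hW₀n, hW₀pc⟩, hW₀V⟩ :=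
    (path_connected_basis (γ 0)).mem_iff.mp (hV₀o.mem_nhds hγ0V₀)
  obtain ⟨W₁, ⟨hW₁n, hW₁pc⟩, hW₁V⟩ :=
    (path_connected_basis (γ 1)).mem_iff.mp (hV₁o.mem_nhds hγ1V₁)
  -- choose ε
  have hA : (γ ⁻¹' W₀ ∩ ⋂ s ∈ {s ∈ T | (0 : unitInterval) ∉ K s}, (K s)ᶜ) ∈ 𝓝 (0 : unitInterval) := by
    refine Filter.inter_mem (γ.continuous.continuousAt.preimage_mem_nhds hW₀n) ?_
    refine (Filter.biInter_mem (hTfin.subset (sep_subset _ _))).2 fun s hs => ?_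
    exact ((hKc s hs.1).isClosed.isOpen_compl).mem_nhds hs.2
  have hB : (γ ⁻¹' W₁ ∩ ⋂ s ∈ {s ∈ T | (1 : unitInterval) ∉ K s}, (K s)ᶜ) ∈ 𝓝 (1 : unitInterval) := by
    refine Filter.inter_mem (γ.continuous.continuousAt.preimage_mem_nhds hW₁n) ?_
    refine (Filter.biInter_mem (hTfin.subset (sep_subset _ _))).2 fun s hs => ?_
    exact ((hKc s hs.1).isClosed.isOpen_compl).mem_nhds hs.2
  obtain ⟨δ₀, hδ₀pos, hδ₀⟩ := Metric.mem_nhds_iff.mp hA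
  obtain ⟨δ₁, hδ₁pos, hδ₁⟩ := Metric.mem_nhds_iff.mp hB
  set ε : ℝ := min (min (δ₀ / 2) (δ₁ / 2)) 3⁻¹ with hεdef
  have hεpos : 0 < ε := lt_min (lt_min (by linarith) (by linarith)) (by norm_num)
  have hεthird : ε ≤ 3⁻¹ := min_le_right _ _
  have hεδ₀ : ε < δ₀ := (min_le_left _ _).trans_lt ((min_le_left _ _).trans_lt (by linarith))
  have hεδ₁ : ε < δ₁ := (min_le_left _ _).trans_lt ((min_le_right _ _).trans_lt (by linarith))
  -- membership near 0 / near 1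
  have hnear0 : ∀ t : unitInterval, (t : ℝ) ≤ ε →
      t ∈ γ ⁻¹' W₀ ∩ ⋂ s ∈ {s ∈ T | (0 : unitInterval) ∉ K s}, (K s)ᶜ := by
    intro t ht
    apply hδ₀
    rw [Metric.mem_ball, Subtype.dist_eq]
    simp only [Icc.coe_zero, dist_zero_right, Real.norm_eq_abs, abs_of_nonneg t.2.1]
    exact lt_of_le_of_lt ht hεδ₀
  have hnear1 : ∀ t : unitInterval, 1 - ε ≤ (t : ℝ) →
      t ∈ γ ⁻¹' W₁ ∩ ⋂ s ∈ {s ∈ T | (1 : unitInterval) ∉ K s}, (K s)ᶜ := by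
    intro t ht
    apply hδ₁
    rw [Metric.mem_ball, Subtype.dist_eq]
    simp only [Icc.coe_one]
    rw [Real.dist_eq, abs_of_nonpos (by linarith [t.2.2])]
    have := t.2.2
    linarith
  have h0K : ∀ s ∈ T, ∀ t : unitInterval, t ∈ K s → (t : ℝ) ≤ ε → (0 : unitInterval) ∈ K s := by
    intro s hs t htK htε
    by_contra h0
    have := (hnear0 t htε).2
    rw [mem_iInter₂] at this
    exact this s ⟨hs, h0⟩ htK
  have h1K : ∀ s ∈ T, ∀ t : unitInterval, t ∈ K s → 1 - ε ≤ (t : ℝ) → (1 : unitInterval) ∈ K s := by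
    intro s hs t htK htε
    by_contra h1
    have := (hnear1 t htε).2
    rw [mem_iInter₂] at this
    exact this s ⟨hs, h1⟩ htK
  -- key points
  have hε01 : ε ∈ Icc (0:ℝ) 1 := ⟨hεpos.le, by linarith [hεthird]⟩
  have h1ε01 : 1 - ε ∈ Icc (0:ℝ) 1 := ⟨by linarith [hεthird], by linarith [hεpos]⟩
  set σ₀ : unitInterval := ⟨ε, hε01⟩ with hσ₀def
  set σ₁ : unitInterval := ⟨1 - ε, h1ε01⟩ with hσ₁def
  have hγσ₀ : γ σ₀ ∈ W₀ := (hnear0 σ₀ le_rfl).1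
  have hγσ₁ : γ σ₁ ∈ W₁ := (hnear1 σ₁ le_rfl).1
  -- the claim
  refine Filter.mem_of_superset (prod_mem_nhds hW₀n hW₁n) ?_
  rintro ⟨x, y⟩ ⟨hx, hy⟩
  obtain ⟨α, hα⟩ := hW₀pc.joinedIn x hx (γ σ₀) hγσ₀
  obtain ⟨β, hβ⟩ := hW₁pc.joinedIn (γ σ₁) hγσ₁ y hy
  set p : Path (γ 0) (γ 1) := { toContinuousMap := γ, source' := rfl, target' := rfl } with hpdef
  set F : ℝ → X := fun t =>
    if t ≤ ε then α.extend (t / ε) else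
      if 1 - ε ≤ t then β.extend ((t - (1 - ε)) / ε) else p.extend t with hFdef
  have hεne : ε ≠ 0 := ne_of_gt hεpos
  have hinner : Continuous fun t : ℝ =>
      if 1 - ε ≤ t then β.extend ((t - (1 - ε)) / ε) else p.extend t := by
    apply Continuous.if_le
    · exact β.continuous_extend.comp ((continuous_id.sub continuous_const).div_const ε)
    · exact p.continuous_extend
    · exact continuous_const
    · exact continuous_id
    · intro t ht
      rw [← ht]
      simp only [sub_self, zero_div]
      rw [Path.extend_zero, p.extend_apply h1ε01]
      rfl
  have hFc : Continuous F := by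
    rw [hFdef]
    apply Continuous.if_le
    · exact α.continuous_extend.comp (continuous_id.div_const ε)
    · exact hinner
    · exact continuous_id
    · exact continuous_const
    · intro t ht
      rw [ht, div_self hεne, Path.extend_one]
      rw [if_neg (by intro h; linarith [hεthird])]
      rw [p.extend_apply hε01]
      rfl
  set γ' : C(unitInterval, X) := ⟨fun t => F (t : ℝ), hFc.comp continuous_subtype_val⟩ with hγ'def
  have hγ'mem : γ' ∈ ⋂₀ T := by
    intro s hs
    rw [← hKV s hs]
    intro t htK
    show F (t : ℝ) ∈ V s
    rcases le_or_gt (t : ℝ) ε with h | h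
    · rw [hFdef]
      simp only [if_pos h]
      have ht01 : (t : ℝ) / ε ∈ Icc (0:ℝ) 1 :=
        ⟨div_nonneg t.2.1 hεpos.le, (div_le_one hεpos).2 h⟩
      rw [Path.extend_apply α ht01]
      have h0 : (0 : unitInterval) ∈ K s := h0K s hs t htK h
      have : W₀ ⊆ V s := hW₀V.trans (biInter_subset_of_mem (Set.mem_sep hs h0))
      exact this (hα _)
    · rw [hFdef]
      simp only [if_neg (not_le.2 h)]
      rcases le_or_gt (1 - ε) (t : ℝ) with h' | h'
      · rw [if_pos h']
        have ht01 : ((t : ℝ) - (1 - ε)) / ε ∈ Icc (0:ℝ) 1 :=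
          ⟨div_nonneg (by linarith) hεpos.le, (div_le_one hεpos).2 (by linarith [t.2.2])⟩
        rw [Path.extend_apply β ht01]
        have h1 : (1 : unitInterval) ∈ K s := h1K s hs t htK h'
        have : W₁ ⊆ V s := hW₁V.trans (biInter_subset_of_mem (Set.mem_sep hs h1))
        exact this (hβ _)
      · rw [if_neg (not_le.2 h')]
        rw [p.extend_apply t.2]
        exact hmem s hs (by simpa using htK)
  refine ⟨γ', hvU hγ'mem, ?_⟩
  have h0' : γ' 0 = x := by
    show F ((0 : unitInterval) : ℝ) = x
    rw [hFdef]
    simp only [Icc.coe_zero, if_pos hεpos.le, zero_div, Path.extend_zero]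
  have h1' : γ' 1 = y := by
    show F ((1 : unitInterval) : ℝ) = y
    rw [hFdef]
    simp only [Icc.coe_one]
    rw [if_neg (by intro hc; linarith [hεthird]), if_pos (by linarith [hεpos]),
      sub_sub_cancel, div_self hεne, Path.extend_one]
  simp [h0', h1']
end

section
/- Let W, X, Y be topological abelian groups, let f : W → X be a continuous injective group homomorphism that is a closed embedding (a homeomorphism onto its image, which is closed in X), and let p : W → Y be a continuous group homomorphism. Let D = {(f(w), −p(w)) : w ∈ W}, a subgroup of X × Y, and let Z = (X × Y)/D with the quotient topology. Then the map g : Y → Z, y ↦ (0, y) + D, is a closed embedding. (This expresses that in the category of topological abelian groups, the pushout of a regular monomorphism along an arbitrary morphism is again a regular monomorphism.) -/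
open Topology
/-- Let `W, X, Y` be topological abelian groups, `f : W → X` a continuous
injective homomorphism which is a closed embedding, and `p : W → Y` a continuous homomorphism.
Let `D = {(f w, −p w) : w ∈ W} ≤ X × Y` and `Z = (X × Y)/D` with the quotient topology.
Then `g : Y → Z`, `y ↦ (0, y) + D`, is a closed embedding.  (In the category of topological
abelian groups, pushouts of regular monomorphisms are regular monomorphisms.) -/
theorem isClosedEmbedding_pushout_inclusion {W X Y : Type*}
    [AddCommGroup W] [TopologicalSpace W] [IsTopologicalAddGroup W]
    [AddCommGroup X] [TopologicalSpace X] [IsTopologicalAddGroup X]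
    [AddCommGroup Y] [TopologicalSpace Y] [IsTopologicalAddGroup Y]
    (f : W →+ X) (hf_cont : Continuous f) (hf_inj : Function.Injective f)
    (hf : IsClosedEmbedding f)
    (p : W →+ Y) (hp : Continuous p) :
    IsClosedEmbedding fun y : Y =>
      (QuotientAddGroup.mk (0, y) : (X × Y) ⧸ (f.prod (-p)).range) := by
  set D := (f.prod (-p)).range with hD
  set g : Y → (X × Y) ⧸ D := fun y => QuotientAddGroup.mk (0, y) with hg
  have hq := QuotientAddGroup.isQuotientMap_mk D
  have hqopen := QuotientAddGroup.isOpenMap_coe (N := D)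
  have hg_cont : Continuous g :=
    continuous_quot_mk.comp (continuous_const.prodMk continuous_id)
  have hmemD : ∀ z : X × Y, z ∈ D ↔ ∃ w, f w = z.1 ∧ -p w = z.2 := by
    intro z
    constructor
    · rintro ⟨w, rfl⟩; exact ⟨w, rfl, rfl⟩
    · rintro ⟨w, h1, h2⟩; exact ⟨w, Prod.ext h1 h2⟩
  have hg_inj : Function.Injective g := by
    intro a b hab
    rw [hg] at hab
    simp only [QuotientAddGroup.eq] at hab
    obtain ⟨w, h1, h2⟩ := (hmemD _).mp hab
    have hw : w = 0 := hf_inj (by simpa using h1)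
    subst hw
    simp only [map_zero, neg_zero, Prod.snd_add, Prod.snd_neg] at h2
    have : -a + b = 0 := by simpa using h2.symm
    linear_combination (norm := abel) -this
  let e := hf.isEmbedding.toHomeomorph
  let σ : Set.range f → W := e.symm
  have hσ : ∀ x : Set.range f, f (σ x) = (x : X) := fun x =>
    congrArg Subtype.val (e.apply_symm_apply x)
  have hrange : (QuotientAddGroup.mk : X × Y → (X × Y) ⧸ D) ⁻¹' (Set.range g)
      = Set.range f ×ˢ Set.univ := by
    ext ⟨x, y⟩
    simp only [Set.mem_preimage, Set.mem_range, Set.mem_prod, Set.mem_univ, and_true]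
    constructor
    · rintro ⟨y', hy'⟩
      rw [hg] at hy'
      rw [QuotientAddGroup.eq] at hy'
      obtain ⟨w, h1, h2⟩ := (hmemD _).mp hy'
      exact ⟨w, by simpa using h1⟩
    · rintro ⟨w, rfl⟩
      refine ⟨y + p w, ?_⟩
      rw [hg, QuotientAddGroup.eq]
      refine (hmemD _).mpr ⟨w, by simp, ?_⟩
      simp only [Prod.snd_add, Prod.snd_neg]
      abel
  have hclosed : IsClosed (Set.range g) := by
    rw [← hq.isClosed_preimage, hrange]
    exact hf.isClosed_range.prod isClosed_univ
  have hind : IsInducing g := by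
    rw [isInducing_iff_nhds]
    intro y₀
    refine le_antisymm ((hg_cont.tendsto y₀).le_comap) ?_
    intro U hU
    obtain ⟨U', hU'U, hU'open, hy₀⟩ := mem_nhds_iff.mp hU
    set H : Set.range f × Y → Y := fun z => z.2 + p (σ z.1) with hH
    have hHcont : Continuous H :=
      continuous_snd.add (hp.comp (e.symm.continuous.comp continuous_fst))
    have hHopen : IsOpen (H ⁻¹' U') := hU'open.preimage hHcont
    have hι : IsInducing (fun z : Set.range f × Y => ((z.1 : X), z.2)) :=
      IsInducing.prodMap IsInducing.subtypeVal IsInducing.id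
    rw [hι.isOpen_iff] at hHopen
    obtain ⟨V, hVopen, hV⟩ := hHopen
    have h0 : (0 : X) ∈ Set.range f := ⟨0, map_zero f⟩
    have hσ0 : σ ⟨0, h0⟩ = 0 := hf_inj (by rw [hσ]; simp)
    have h0V : ((0 : X), y₀) ∈ V := by
      have hm : (⟨⟨0, h0⟩, y₀⟩ : Set.range f × Y) ∈ H ⁻¹' U' := by
        simp [hH, hσ0, hy₀]
      rw [← hV] at hm
      exact hm
    refine Filter.mem_comap.mpr
      ⟨_, hqopen.image_mem_nhds (hVopen.mem_nhds h0V), ?_⟩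
    rintro y ⟨v, hvV, hv⟩
    rw [hg] at hv
    rw [QuotientAddGroup.eq] at hv
    obtain ⟨w, h1, h2⟩ := (hmemD _).mp hv
    have h1' : f (-w) = v.1 := by
      simp only [map_neg]
      have : f w = -v.1 + 0 := h1
      simp at this
      rw [this]; simp
    have h2' : -p w = -v.2 + y := h2
    have hx : v.1 ∈ Set.range f := ⟨-w, h1'⟩
    have hσv : σ ⟨v.1, hx⟩ = -w := hf_inj (by rw [hσ, h1'])
    have hHv : H ⟨⟨v.1, hx⟩, v.2⟩ ∈ U' := by
      have hm : (⟨⟨v.1, hx⟩, v.2⟩ : Set.range f × Y)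
          ∈ (fun z : Set.range f × Y => ((z.1 : X), z.2)) ⁻¹' V := by simpa using hvV
      rw [hV] at hm
      exact hm
    apply hU'U
    have hHv' : v.2 + p (σ ⟨v.1, hx⟩) ∈ U' := hHv
    have hy : v.2 + p (σ ⟨v.1, hx⟩) = y := by
      rw [hσv, map_neg]
      have : v.2 + -p w = y := by rw [h2']; abel
      exact this
    rwa [hy] at hHv'
  exact ⟨⟨hind, hg_inj⟩, hclosed⟩
end

section
/- Let C be a category with pullbacks and let 𝒫 be a class of objects of C. Suppose that for every object X of C there exists P ∈ 𝒫 and a 𝒫-split regular epimorphism P → X. Then every 𝒫-split morphism in C is a regular epimorphism. -/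
open CategoryTheory Limits

universe v u

variable {C : Type u} [Category.{v} C]

/-- A morphism `f : X ⟶ Y` is `Proj`-split if `Hom(P, X) → Hom(P, Y)` is surjective for every
object `P` in the class `Proj`. -/
def PSplit (Proj : C → Prop) {X Y : C} (f : X ⟶ Y) : Prop :=
  ∀ P : C, Proj P → Function.Surjective fun g : P ⟶ X => g ≫ f

/-- Let `C` be a category with pullbacks and `Proj` a class of objects such that
every object admits a `Proj`-split regular epimorphism from an object of `Proj`. Then every
`Proj`-split morphism in `C` is a regular epimorphism. -/
theorem regularEpi_of_pSplit [HasPullbacks C] (Proj : C → Prop)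
    (h : ∀ X : C, ∃ (P : C) (u : P ⟶ X), Proj P ∧ PSplit Proj u ∧ Nonempty (RegularEpi u))
    {X Y : C} (f : X ⟶ Y) (hf : PSplit Proj f) :
    Nonempty (RegularEpi f) := by
  obtain ⟨P, u, hP, hu, ⟨ru⟩⟩ := h Y
  obtain ⟨s, hs⟩ := hf P hP u
  simp only at hs
  obtain ⟨R, w, hR, hwsplit, ⟨rw'⟩⟩ := h X
  haveI : RegularEpi w := rw'
  haveI : Epi w := RegularEpi.epi w rw'
  haveI : Epi u := RegularEpi.epi u ru
  obtain ⟨m, hm⟩ := hu R hR (w ≫ f)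
  simp only at hm
  have key : ∀ c : Cofork (pullback.fst f f) (pullback.snd f f),
      ru.left ≫ s ≫ c.π = ru.right ≫ s ≫ c.π := by
    intro c
    have hcond : pullback.fst f f ≫ c.π = pullback.snd f f ≫ c.π := c.condition
    have heq : (ru.left ≫ s) ≫ f = (ru.right ≫ s) ≫ f := by
      simp only [Category.assoc, hs]; exact ru.w
    have h1 := pullback.lift_fst (f := f) (g := f) (ru.left ≫ s) (ru.right ≫ s) heq
    have h2 := pullback.lift_snd (f := f) (g := f) (ru.left ≫ s) (ru.right ≫ s) heq
    calc ru.left ≫ s ≫ c.π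
        = (pullback.lift (ru.left ≫ s) (ru.right ≫ s) heq ≫ pullback.fst f f) ≫ c.π := by
          rw [h1]; simp
      _ = (pullback.lift (ru.left ≫ s) (ru.right ≫ s) heq ≫ pullback.snd f f) ≫ c.π := by
          simp only [Category.assoc, hcond]
      _ = ru.right ≫ s ≫ c.π := by rw [h2]; simp
  refine ⟨⟨pullback f f, pullback.fst f f, pullback.snd f f, pullback.condition, ?_⟩⟩
  refine Cofork.IsColimit.mk _
    (fun c => Cofork.IsColimit.desc ru.isColimit (s ≫ c.π) (key c)) (fun c => ?_)
    (fun c k hk => ?_)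
  · -- fac : f ≫ desc = c.π
    rw [← cancel_epi w]
    have hdesc : u ≫ Cofork.IsColimit.desc ru.isColimit (s ≫ c.π) (key c) = s ≫ c.π :=
      Cofork.IsColimit.π_desc ru.isColimit
    have heq : (m ≫ s) ≫ f = w ≫ f := by rw [Category.assoc, hs, hm]
    have hlift1 := pullback.lift_fst (f := f) (g := f) (m ≫ s) w heq
    have hlift2 := pullback.lift_snd (f := f) (g := f) (m ≫ s) w heq
    have hcond : pullback.fst f f ≫ c.π = pullback.snd f f ≫ c.π := c.condition
    calc w ≫ f ≫ Cofork.IsColimit.desc ru.isColimit (s ≫ c.π) (key c)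
        = m ≫ u ≫ Cofork.IsColimit.desc ru.isColimit (s ≫ c.π) (key c) := by
          simp only [← Category.assoc, hm]
      _ = m ≫ s ≫ c.π := by rw [hdesc]
      _ = (pullback.lift (m ≫ s) w heq ≫ pullback.fst f f) ≫ c.π := by
          rw [hlift1]; simp
      _ = (pullback.lift (m ≫ s) w heq ≫ pullback.snd f f) ≫ c.π := by
          simp only [Category.assoc, hcond]
      _ = w ≫ c.π := by rw [hlift2]
  · -- uniqueness
    apply Cofork.IsColimit.hom_ext ru.isColimit
    have hdesc : u ≫ Cofork.IsColimit.desc ru.isColimit (s ≫ c.π) (key c) = s ≫ c.π :=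
      Cofork.IsColimit.π_desc ru.isColimit
    simp only [Cofork.π_ofπ] at hk ⊢
    rw [hdesc, ← hk, ← Category.assoc, hs]
end

section
/- Let C be a category with finite coproducts and let 𝒫 be a class of objects of C. A morphism f : X → Y of simplicial objects in C has the right lifting property with respect to all the maps ∂Δⁿ · P → Δⁿ · P (for all n ≥ 0 and P ∈ 𝒫) induced by the boundary inclusions if and only if for every P ∈ 𝒫 the induced map of simplicial sets ([m] ↦ Hom_C(P, Xₘ)) → ([m] ↦ Hom_C(P, Yₘ)) is a trivial Kan fibration (i.e. has the right lifting property with respect to all boundary inclusions ∂Δⁿ → Δⁿ of simplicial sets). -/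
open CategoryTheory Limits Opposite Simplicial

universe v u

variable {C : Type u} [Category.{v} C]

instance (a b : SimplexCategory) : Finite (a ⟶ b) :=
  Finite.of_injective (fun f => (f.toOrderHom : Fin (a.len + 1) → Fin (b.len + 1)))
    (fun f g h => SimplexCategory.Hom.ext' f g (OrderHom.ext _ _ h))

instance (n : SimplexCategory) (m : SimplexCategoryᵒᵖ) :
    Finite ((SSet.stdSimplex.obj n).obj m) :=
  Finite.of_equiv _ (SSet.stdSimplex.objEquiv (n := n) (m := m)).symm

instance (n : ℕ) (m : SimplexCategoryᵒᵖ) : Finite ((SSet.boundary n).toSSet.obj m) :=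
  Subtype.finite

variable [HasFiniteCoproducts C]

/-- `S · P`: the simplicial object with `(S · P)ₘ = ∐_{Sₘ} P`, the coproduct of copies of `P`
indexed by the `m`-simplices of the simplicial set `S`. -/
@[simps]
noncomputable def sTensor (S : SSet.{0}) (P : C)
    [∀ m : SimplexCategoryᵒᵖ, HasColimitsOfShape (Discrete (S.obj m)) C] :
    SimplexCategoryᵒᵖ ⥤ C where
  obj m := ∐ fun _ : S.obj m => P
  map {m m'} g := Sigma.desc fun s => Sigma.ι (fun _ : S.obj m' => P) (S.map g s)
  map_id m := by
    ext s
    simp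
  map_comp {m m' m''} g g' := by
    ext s
    simp

/-- Functoriality of `S · P` in the simplicial set `S`. -/
noncomputable def sTensorMapLeft {S T : SSet.{0}} (σ : S ⟶ T) (P : C)
    [∀ m : SimplexCategoryᵒᵖ, HasColimitsOfShape (Discrete (S.obj m)) C]
    [∀ m : SimplexCategoryᵒᵖ, HasColimitsOfShape (Discrete (T.obj m)) C] :
    sTensor S P ⟶ sTensor T P where
  app m := Sigma.desc fun s => Sigma.ι (fun _ : T.obj m => P) (σ.app m s)
  naturality {m m'} g := by
    dsimp only [sTensor]
    ext s
    simp [NatTrans.naturality_apply]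

section Aux

variable (P : C) {Z W : SimplexCategoryᵒᵖ ⥤ C}

/-- Cross-universe equivalence on simplices of `Δ[n]`. -/
def sSimplexEquiv (n : ℕ) (m : SimplexCategoryᵒᵖ) :
    (SSet.stdSimplex.obj ⦋n⦌ : SSet.{0}).obj m ≃
      (SSet.stdSimplex.obj ⦋n⦌ : SSet.{v}).obj m :=
  Equiv.ulift.{0}.trans Equiv.ulift.{v}.symm

lemma sSimplexEquiv_natural (n : ℕ) {m m' : SimplexCategoryᵒᵖ} (g : m ⟶ m')
    (x : (SSet.stdSimplex.obj ⦋n⦌ : SSet.{0}).obj m) :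
    (SSet.stdSimplex.obj ⦋n⦌ : SSet.{v}).map g (sSimplexEquiv n m x) =
      sSimplexEquiv n m' ((SSet.stdSimplex.obj ⦋n⦌ : SSet.{0}).map g x) :=
  rfl

/-- Cross-universe equivalence on simplices of `∂Δ[n]`. -/
def sBoundaryEquiv (n : ℕ) (m : SimplexCategoryᵒᵖ) :
    (SSet.boundary.{0} n).toSSet.obj m ≃ (SSet.boundary.{v} n).toSSet.obj m :=
  Equiv.subtypeEquiv (sSimplexEquiv n m) (fun _ => Iff.rfl)

lemma sBoundaryEquiv_natural (n : ℕ) {m m' : SimplexCategoryᵒᵖ} (g : m ⟶ m')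
    (x : (SSet.boundary.{0} n).toSSet.obj m) :
    (SSet.boundary.{v} n).toSSet.map g (sBoundaryEquiv n m x) =
      sBoundaryEquiv n m' ((SSet.boundary.{0} n).toSSet.map g x) :=
  rfl

variable {S : SSet.{0}} {S' : SSet.{v}} (e : ∀ m, S.obj m ≃ S'.obj m)
  (he : ∀ {m m' : SimplexCategoryᵒᵖ} (g : m ⟶ m') (s : S.obj m),
    S'.map g (e m s) = e m' (S.map g s))
  [∀ m : SimplexCategoryᵒᵖ, HasColimitsOfShape (Discrete (S.obj m)) C]

/-- the inverse direction of the tensor-hom adjunction bijection -/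
noncomputable def descHom (v : S' ⟶ Z ⋙ coyoneda.obj (op P)) : sTensor S P ⟶ Z where
  app m := Sigma.desc fun s => v.app m (e m s)
  naturality {m m'} g := by
    dsimp only [sTensor]
    ext s
    have := NatTrans.naturality_apply v g (e m s)
    dsimp [coyoneda] at this ⊢
    simp [he g s, ← this]

lemma descHom_injective (v w : S' ⟶ Z ⋙ coyoneda.obj (op P))
    (h : descHom P e he v = descHom P e he w) : v = w := by
  ext m x
  have := congr_arg (fun t => Sigma.ι (fun _ : S.obj m => P) ((e m).symm x) ≫ t.app m) h
  dsimp [descHom] at this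
  simpa using this

lemma descHom_comp_right (v : S' ⟶ Z ⋙ coyoneda.obj (op P)) (f : Z ⟶ W) :
    descHom P e he v ≫ f =
      descHom P e he (v ≫ Functor.whiskerRight f (coyoneda.obj (op P))) := by
  ext m : 2
  dsimp [descHom]
  refine Sigma.hom_ext _ _ fun s => ?_
  simp
  exact Sigma.ι_desc_assoc _ s (f.app m)

/-- the forward direction of the tensor-hom adjunction bijection -/
noncomputable def transposeHom (u : sTensor S P ⟶ Z) : S' ⟶ Z ⋙ coyoneda.obj (op P) where
  app m := TypeCat.ofHom fun x => Sigma.ι (fun _ : S.obj m => P) ((e m).symm x) ≫ u.app m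
  naturality {m m'} g := by
    ext x
    have h1 : (e m').symm (S'.map g x) = S.map g ((e m).symm x) := by
      apply (e m').injective
      rw [Equiv.apply_symm_apply, ← he, Equiv.apply_symm_apply]
    have h2 := u.naturality g
    dsimp [coyoneda] at *
    erw [h1, Category.assoc, ← h2]
    exact (Sigma.ι_desc_assoc (fun s => Sigma.ι (fun _ : S.obj m' => P) (S.map g s))
      ((e m).symm x) (u.app m')).symm

lemma descHom_transposeHom (u : sTensor S P ⟶ Z) :
    descHom P e he (@transposeHom C _ P Z S S' e he _ u) = u := by
  ext m : 2
  dsimp [descHom, transposeHom]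
  refine Sigma.hom_ext _ _ fun s => ?_
  simp

end Aux

lemma descHom_boundary_comp (P : C) {Z : SimplexCategoryᵒᵖ ⥤ C} (n : ℕ)
    (v : (SSet.stdSimplex.obj ⦋n⦌ : SSet.{v}) ⟶ Z ⋙ coyoneda.obj (op P)) :
    sTensorMapLeft ((SSet.boundary n).ι) P ≫
        descHom P (sSimplexEquiv n) (sSimplexEquiv_natural n) v =
      descHom P (sBoundaryEquiv n) (sBoundaryEquiv_natural n)
        ((SSet.boundary.{v} n).ι ≫ v) := by
  ext m : 2
  dsimp [descHom, sTensorMapLeft]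
  refine Sigma.hom_ext _ _ fun s => ?_
  simp
  erw [Sigma.ι_desc_assoc, Sigma.ι_desc]
  rfl

/-- Let `C` have finite coproducts and let `Proj` be a class of objects.
A morphism `f : X ⟶ Y` of simplicial objects in `C` has the right lifting property with
respect to all maps `∂Δⁿ · P → Δⁿ · P` (`n ≥ 0`, `P ∈ Proj`) induced by the boundary
inclusions if and only if for every `P ∈ Proj` the induced map of simplicial sets
`([m] ↦ Hom_C(P, Xₘ)) → ([m] ↦ Hom_C(P, Yₘ))` is a trivial Kan fibration, i.e. has the right
lifting property with respect to the boundary inclusions `∂Δⁿ → Δⁿ` of simplicial sets. -/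
theorem rlp_boundary_tensor_iff_trivialKanFibration (Proj : C → Prop)
    {X Y : SimplexCategoryᵒᵖ ⥤ C} (f : X ⟶ Y) :
    (∀ (n : ℕ) (P : C), Proj P →
        HasLiftingProperty (sTensorMapLeft (SSet.boundary n).ι P) f) ↔
      ∀ P : C, Proj P → ∀ n : ℕ,
        HasLiftingProperty (SSet.boundary.{v} n).ι
          (Functor.whiskerRight f (coyoneda.obj (op P))) := by

  constructor
  · intro h P hP n
    have hl := h n P hP
    constructor
    intro α β sq
    have sq' : CommSq (descHom P (sBoundaryEquiv n) (sBoundaryEquiv_natural n) α)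
        (sTensorMapLeft ((SSet.boundary n).ι) P) f
        (descHom P (sSimplexEquiv n) (sSimplexEquiv_natural n) β) := by
      constructor
      rw [descHom_comp_right, sq.w, descHom_boundary_comp]
    refine ⟨⟨⟨transposeHom P (sSimplexEquiv n) (sSimplexEquiv_natural n) sq'.lift, ?_, ?_⟩⟩⟩
    · apply descHom_injective P (sBoundaryEquiv n) (sBoundaryEquiv_natural n)
      rw [← descHom_boundary_comp, descHom_transposeHom, sq'.fac_left]
    · apply descHom_injective P (sSimplexEquiv n) (sSimplexEquiv_natural n)
      rw [← descHom_comp_right, descHom_transposeHom, sq'.fac_right]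
  · intro h n P hP
    have hl := h P hP n
    constructor
    intro u w sq
    have sq' : CommSq (transposeHom (Z := X) P (sBoundaryEquiv n) (sBoundaryEquiv_natural n) u)
        ((SSet.boundary.{v} n).ι) (Functor.whiskerRight f (coyoneda.obj (op P)))
        (transposeHom (Z := Y) P (sSimplexEquiv n) (sSimplexEquiv_natural n) w) := by
      constructor
      apply descHom_injective P (sBoundaryEquiv n) (sBoundaryEquiv_natural n)
      rw [← descHom_comp_right, descHom_transposeHom, ← descHom_boundary_comp,
        descHom_transposeHom]
      exact sq.w
    exact ⟨⟨⟨descHom P (sSimplexEquiv n) (sSimplexEquiv_natural n) sq'.lift, by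
      rw [descHom_boundary_comp, sq'.fac_left, descHom_transposeHom], by
      rw [descHom_comp_right, sq'.fac_right, descHom_transposeHom]⟩⟩⟩
end

section
/- Let C be an additive category with countable products and let 𝒫 be a class of objects of C. Let A = (A_{m,n}) be a double complex in C (with anticommuting horizontal and vertical differentials) such that A_{m,n} = 0 for m < 0, and suppose that for every n the row complex (A_{m,n})_{m ≥ 0} is 𝒫-exact. Then the product total complex Tot^∏(A), with Tot^∏(A)_k = ∏_{m ≥ 0} A_{m, k−m} and differential the sum of the horizontal and vertical differentials, is 𝒫-exact. -/
open CategoryTheory Limits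

universe v u

variable {C : Type u} [Category.{v} C] [Preadditive C] [HasCountableProducts C]

/-- The `k`-th object of the product total complex of a right half-plane double complex
`A : ℕ → ℤ → C`: the product `∏_{m+n=k} A_{m,n}` (equivalently `∏_{m ≥ 0} A_{m,k−m}`). -/
noncomputable def totObj (A : ℕ → ℤ → C) (k : ℤ) : C :=
  ∏ᶜ fun p : { p : ℕ × ℤ // (p.1 : ℤ) + p.2 = k } => A p.1.1 p.1.2

/-- The differential of the product total complex: the sum of the horizontal and vertical
differentials (`dh m n : A (m+1) n ⟶ A m n` and `dv m n : A m (n+1) ⟶ A m n`). -/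
noncomputable def totD (A : ℕ → ℤ → C)
    (dh : ∀ (m : ℕ) (n : ℤ), A (m + 1) n ⟶ A m n)
    (dv : ∀ (m : ℕ) (n : ℤ), A m (n + 1) ⟶ A m n) (k : ℤ) :
    totObj A (k + 1) ⟶ totObj A k :=
  Pi.lift fun p =>
    Pi.π (fun q : { q : ℕ × ℤ // (q.1 : ℤ) + q.2 = k + 1 } => A q.1.1 q.1.2)
        ⟨(p.1.1 + 1, p.1.2), by have := p.2; push_cast at this ⊢; omega⟩ ≫ dh p.1.1 p.1.2 +
      Pi.π (fun q : { q : ℕ × ℤ // (q.1 : ℤ) + q.2 = k + 1 } => A q.1.1 q.1.2)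
        ⟨(p.1.1, p.1.2 + 1), by have := p.2; push_cast at this ⊢; omega⟩ ≫ dv p.1.1 p.1.2

theorem assembly_aux {B : ℕ → ℤ → Type*} [∀ m n, AddCommGroup (B m n)]
    (Dh : ∀ (m : ℕ) (n : ℤ), B (m+1) n →+ B m n)
    (Dv : ∀ (m : ℕ) (n : ℤ), B m (n+1) →+ B m n)
    (hdvdv : ∀ (m : ℕ) (n : ℤ) (x : B m (n+1+1)), Dv m n (Dv m (n+1) x) = 0)
    (hanti : ∀ (m : ℕ) (n : ℤ) (x : B (m+1) (n+1)),
      Dv m n (Dh m (n+1) x) + Dh m n (Dv (m+1) n x) = 0)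
    (hsurj : ∀ (n : ℤ) (y : B 0 n), ∃ x : B 1 n, Dh 0 n x = y)
    (hexact : ∀ (m : ℕ) (n : ℤ) (y : B (m+1) n), Dh m n y = 0 →
      ∃ x : B (m+2) n, Dh (m+1) n x = y)
    (k : ℤ)
    (gc : ∀ (m : ℕ) (n : ℤ), ((m:ℤ) + n = k + 1) → B m n)
    (cyc : ∀ (m : ℕ) (n : ℤ) (hn : (m:ℤ) + n = k),
      Dh m n (gc (m+1) n (by push_cast; omega)) + Dv m n (gc m (n+1) (by omega)) = 0) :
    ∃ H : ∀ (m : ℕ) (n : ℤ), ((m:ℤ) + n = k + 1 + 1) → B m n,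
      ∀ (m : ℕ) (n : ℤ) (hn : (m:ℤ) + n = k + 1),
        Dh m n (H (m+1) n (by push_cast; omega)) + Dv m n (H m (n+1) (by omega))
          = gc m n hn := by
  classical
  let T : ℕ → Type _ := fun m =>
    { f : (∀ n : ℤ, ((m:ℤ) + n = k + 1 + 1) → B m n) ×
          (∀ n : ℤ, (((m+1 : ℕ):ℤ) + n = k + 1 + 1) → B (m+1) n) //
      ∀ (n : ℤ) (hn : (m:ℤ) + n = k + 1),
        Dh m n (f.2 n (by push_cast; omega)) + Dv m n (f.1 (n+1) (by omega)) = gc m n hn }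
  let base : T 0 :=
    ⟨⟨fun _ _ => 0, fun n hn => (hsurj n (gc 0 n (by push_cast at hn ⊢; omega))).choose⟩, by
      intro n hn
      rw [map_zero, add_zero]
      exact (hsurj n (gc 0 n _)).choose_spec⟩
  have key : ∀ (m : ℕ) (x : T m) (n : ℤ) (hn : ((m+1+1 : ℕ):ℤ) + n = k + 1 + 1),
      Dh m n (gc (m+1) n (by push_cast at hn ⊢; omega) -
        Dv (m+1) n (x.1.2 (n+1) (by push_cast at hn ⊢; omega))) = 0 := by
    intro m x n hn
    have hk : (m:ℤ) + n = k := by push_cast at hn; omega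
    have h1 := cyc m n hk
    have h2 := hanti m n (x.1.2 (n+1) (by push_cast at hn ⊢; omega))
    have h3 := congrArg (Dv m n) (x.2 (n+1) (by omega))
    rw [map_add, hdvdv, add_zero] at h3
    rw [map_sub, eq_neg_of_add_eq_zero_left h1, eq_neg_of_add_eq_zero_right h2, h3]
    abel
  let step : ∀ m : ℕ, T m → T (m+1) := fun m x =>
    ⟨⟨x.1.2, fun n hn => (hexact m n _ (key m x n hn)).choose⟩, by
      intro n hn
      rw [(hexact m n _ (key m x n (by push_cast at hn ⊢; omega))).choose_spec]
      abel⟩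
  let F : ∀ m, T m := fun m => Nat.rec base step m
  exact ⟨fun m n hn => (F m).1.1 n hn, fun m n hn => (F m).2 n hn⟩

/-- **Acyclic Assembly Lemma.** Let `C` be an additive category with countable
products and `Proj` a class of objects of `C`.  Let `A` be a double complex concentrated in
columns `m ≥ 0` (with anticommuting horizontal and vertical differentials squaring to zero)
whose rows are all `Proj`-exact, i.e. applying `Hom(P, −)` to each row gives an exact complex
of abelian groups for every `P ∈ Proj`.  Then the product total complex `Tot^∏(A)`, with
`Tot^∏(A)_k = ∏_{m ≥ 0} A_{m,k−m}` and differential the sum of the horizontal and vertical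
differentials, is `Proj`-exact. -/
theorem totalComplex_pExact_of_rows_pExact (Proj : C → Prop) (A : ℕ → ℤ → C)
    (dh : ∀ (m : ℕ) (n : ℤ), A (m + 1) n ⟶ A m n)
    (dv : ∀ (m : ℕ) (n : ℤ), A m (n + 1) ⟶ A m n)
    (hdh : ∀ (m : ℕ) (n : ℤ), dh (m + 1) n ≫ dh m n = 0)
    (hdv : ∀ (m : ℕ) (n : ℤ), dv m (n + 1) ≫ dv m n = 0)
    (hanti : ∀ (m : ℕ) (n : ℤ), dh m (n + 1) ≫ dv m n + dv (m + 1) n ≫ dh m n = 0)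
    (hrows : ∀ P : C, Proj P → ∀ n : ℤ,
      (∀ g : P ⟶ A 0 n, ∃ h : P ⟶ A 1 n, h ≫ dh 0 n = g) ∧
      (∀ (m : ℕ) (g : P ⟶ A (m + 1) n), g ≫ dh m n = 0 →
        ∃ h : P ⟶ A (m + 2) n, h ≫ dh (m + 1) n = g)) :
    ∀ P : C, Proj P → ∀ (k : ℤ) (g : P ⟶ totObj A (k + 1)),
      g ≫ totD A dh dv k = 0 →
        ∃ h : P ⟶ totObj A (k + 1 + 1), h ≫ totD A dh dv (k + 1) = g := by
  intro P hP k g hg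
  classical
  have cyc : ∀ (m : ℕ) (n : ℤ) (hn : (m:ℤ) + n = k),
      (g ≫ Pi.π (fun q : { q : ℕ × ℤ // (q.1 : ℤ) + q.2 = k + 1 } => A q.1.1 q.1.2)
          ⟨(m+1, n), by push_cast; omega⟩) ≫ dh m n +
      (g ≫ Pi.π (fun q : { q : ℕ × ℤ // (q.1 : ℤ) + q.2 = k + 1 } => A q.1.1 q.1.2)
          ⟨(m, n+1), by omega⟩) ≫ dv m n = 0 := by
    intro m n hn
    have h0 := congrArg (fun f => f ≫ Pi.π
      (fun q : { q : ℕ × ℤ // (q.1 : ℤ) + q.2 = k } => A q.1.1 q.1.2) ⟨(m, n), hn⟩) hg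
    erw [Category.assoc, totD, limit.lift_π, Fan.mk_π_app, zero_comp, Preadditive.comp_add] at h0
    erw [Category.assoc, Category.assoc]
    exact h0
  obtain ⟨H, hH⟩ := assembly_aux
    (B := fun m n => (P ⟶ A m n))
    (fun m n => AddMonoidHom.mk' (fun f => f ≫ dh m n)
      (fun a b => Preadditive.add_comp _ _ _ _ _ _))
    (fun m n => AddMonoidHom.mk' (fun f => f ≫ dv m n)
      (fun a b => Preadditive.add_comp _ _ _ _ _ _))
    (by intro m n x
        simp only [AddMonoidHom.mk'_apply, Category.assoc]
        rw [hdv, Limits.comp_zero])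
    (by intro m n x
        simp only [AddMonoidHom.mk'_apply, Category.assoc]
        rw [← Preadditive.comp_add, hanti, Limits.comp_zero])
    (fun n y => (hrows P hP n).1 y)
    (fun m n y hy => (hrows P hP n).2 m y hy)
    k
    (fun m n hn => g ≫ Pi.π
      (fun q : { q : ℕ × ℤ // (q.1 : ℤ) + q.2 = k + 1 } => A q.1.1 q.1.2) ⟨(m, n), hn⟩)
    (by intro m n hn
        simpa only [AddMonoidHom.mk'_apply] using cyc m n hn)
  refine ⟨Pi.lift (fun p => H p.1.1 p.1.2 p.2), ?_⟩
  apply Pi.hom_ext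
  rintro ⟨⟨m, n⟩, hp⟩
  have key := hH m n hp
  simp only [AddMonoidHom.mk'_apply] at key
  erw [Category.assoc, totD, limit.lift_π, Fan.mk_π_app, Preadditive.comp_add]
  erw [← Category.assoc, ← Category.assoc, limit.lift_π, limit.lift_π]
  exact key
end
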